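/- Let F(t) = μ((−∞,t]) be the cumulative distribution function of a probability measure μ on ℝ, and let F_n(t) = (1/n)∑_{k=1}^n 1_{X_k ≤ t} be the empirical distribution function of i.i.d. samples X_1,...,X_n ∼ μ. Then almost surely, sup_{t∈ℝ} |F_n(t) − F(t)| → 0 as n → ∞. -/

import Mathlib

open MeasureTheory Filter Topology ProbabilityTheory Set Function

/-- SLLN for indicator functions of a measurable set, for an iid sequence. -/
lemma gc_slln_indicator {Ω : Type*} [MeasurableSpace Ω] (P : Measure Ω)
    [IsProbabilityMeasure P]
    (μ : Measure ℝ) [IsProbabilityMeasure μ]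
    (X : ℕ → Ω → ℝ) (hmeas : ∀ k, Measurable (X k))
    (hindep : iIndepFun X P)
    (hdist : ∀ k, P.map (X k) = μ) (S : Set ℝ) (hS : MeasurableSet S) :
    ∀ᵐ ω ∂P, Tendsto (fun n : ℕ => (∑ k ∈ Finset.range n, S.indicator (fun _ => (1:ℝ)) (X k ω)) / n)
      atTop (𝓝 (μ S).toReal) := by
  have hgm : Measurable (S.indicator (fun _ => (1:ℝ))) := measurable_const.indicator hS
  have hident : ∀ i, IdentDistrib (X i) (X 0) P P := fun i =>
    ⟨(hmeas i).aemeasurable, (hmeas 0).aemeasurable, by rw [hdist i, hdist 0]⟩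
  have hint : Integrable (fun ω => S.indicator (fun _ => (1:ℝ)) (X 0 ω)) P := by
    have : Integrable (S.indicator (fun _ => (1:ℝ))) μ := by
      rw [integrable_indicator_iff hS]
      exact integrableOn_const (measure_ne_top μ S)
    rw [← hdist 0] at this
    exact (integrable_map_measure hgm.aestronglyMeasurable (hmeas 0).aemeasurable).mp this
  have key := strong_law_ae_real (fun k ω => S.indicator (fun _ => (1:ℝ)) (X k ω)) hint
    (fun i j hij => (hindep.indepFun hij).comp hgm hgm)
    (fun i => (hident i).comp hgm)
  have hE : ∫ ω, S.indicator (fun _ => (1:ℝ)) (X 0 ω) ∂P = (μ S).toReal := by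
    rw [← integral_map (hmeas 0).aemeasurable hgm.aestronglyMeasurable, hdist 0]
    exact integral_indicator_one hS
  rwa [hE] at key

/-- Quantile grid points of a measure. -/
noncomputable def gcQ (μ : Measure ℝ) (m j : ℕ) : ℝ :=
  sInf {t : ℝ | (j : ℝ) / (m : ℝ) ≤ cdf μ t}

/-- Deterministic part of Glivenko–Cantelli: convergence at all quantile grid points
(together with monotonicity-type structural hypotheses) implies uniform convergence. -/
lemma gc_det (μ : Measure ℝ) [IsProbabilityMeasure μ] (Fn Gn : ℕ → ℝ → ℝ)
    (hFn0 : ∀ n t, 0 ≤ Fn n t) (hFn1 : ∀ n t, Fn n t ≤ 1)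
    (hFnmono : ∀ n ⦃s t : ℝ⦄, s ≤ t → Fn n s ≤ Fn n t)
    (hFnGn : ∀ n ⦃s t : ℝ⦄, s < t → Fn n s ≤ Gn n t)
    (h1 : ∀ m j : ℕ, Tendsto (fun n => Fn n (gcQ μ m j)) atTop (𝓝 (cdf μ (gcQ μ m j))))
    (h2 : ∀ m j : ℕ, Tendsto (fun n => Gn n (gcQ μ m j)) atTop
      (𝓝 ((μ (Set.Iio (gcQ μ m j))).toReal))) :
    Tendsto (fun n => ⨆ t : ℝ, |Fn n t - cdf μ t|) atTop (𝓝 0) := by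
  set F : ℝ → ℝ := fun t => cdf μ t with hF
  have hFmono : Monotone F := monotone_cdf μ
  have hF0 : ∀ t, 0 ≤ F t := cdf_nonneg μ
  have hF1 : ∀ t, F t ≤ 1 := cdf_le_one μ
  -- Iio measure equals the left limit of the cdf
  have hIio : ∀ t, (μ (Set.Iio t)).toReal = leftLim F t := by
    intro t
    have hsing : (μ {t}).toReal = F t - leftLim F t := by
      rw [← measure_cdf μ, (cdf μ).measure_singleton t,
        ENNReal.toReal_ofReal (sub_nonneg.2 (hFmono.leftLim_le le_rfl))]
    have hdisj : Disjoint (Set.Iio t) ({t} : Set ℝ) := by simp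
    have hsplit : μ (Set.Iic t) = μ (Set.Iio t) + μ {t} := by
      rw [← measure_union hdisj (measurableSet_singleton t), Set.Iio_union_right]
    have hFt : ∀ s : ℝ, F s = (μ (Set.Iic s)).toReal := fun s => cdf_eq_real μ s
    have h3 : F t = (μ (Set.Iio t)).toReal + (μ {t}).toReal := by
      rw [hFt t, hsplit, ENNReal.toReal_add (measure_ne_top μ _) (measure_ne_top μ _)]
    rw [hsing] at h3; linarith
  rw [Metric.tendsto_atTop]
  intro ε hε
  obtain ⟨mm, hmm⟩ := exists_nat_one_div_lt (half_pos hε)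
  obtain ⟨m, hm2, hm1⟩ : ∃ m : ℕ, 2 ≤ m ∧ (1:ℝ)/(m:ℝ) < ε/2 := by
    refine ⟨mm + 2, by omega, lt_of_le_of_lt ?_ hmm⟩
    apply div_le_div_of_nonneg_left zero_le_one (by positivity)
    push_cast; linarith
  have hm0 : (0:ℝ) < (m:ℝ) := by exact_mod_cast (by omega : 0 < m)
  -- facts about the grid points, for 1 ≤ j ≤ m - 1
  have hgrid : ∀ j : ℕ, 1 ≤ j → j ≤ m - 1 →
      ((j:ℝ)/(m:ℝ) ≤ F (gcQ μ m j) ∧ leftLim F (gcQ μ m j) ≤ (j:ℝ)/(m:ℝ)) := by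
    intro j hj1 hjm
    have hjr0 : (0:ℝ) < (j:ℝ)/(m:ℝ) := by
      apply div_pos _ hm0; exact_mod_cast hj1
    have hjr1 : (j:ℝ)/(m:ℝ) < 1 := by
      rw [div_lt_one hm0]
      have : j < m := lt_of_le_of_lt hjm (by omega)
      exact_mod_cast this
    set S : Set ℝ := {t : ℝ | (j : ℝ) / (m : ℝ) ≤ F t} with hSdef
    have hne : S.Nonempty := by
      have := ((tendsto_cdf_atTop μ).eventually (eventually_ge_nhds hjr1)).exists
      exact this
    have hbdd : BddBelow S := by
      obtain ⟨t0, ht0⟩ := ((tendsto_cdf_atBot μ).eventually (eventually_lt_nhds hjr0)).exists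
      refine ⟨t0, fun t ht => ?_⟩
      by_contra h
      push_neg at h
      exact absurd (le_trans ht (hFmono h.le)) (not_le.2 ht0)
    have hQ : gcQ μ m j = sInf S := rfl
    constructor
    · -- right continuity
      have hev : ∀ s ∈ Set.Ioi (gcQ μ m j), (j:ℝ)/(m:ℝ) ≤ F s := by
        intro s hs
        rw [hQ] at hs
        obtain ⟨u, hu, hus⟩ := (csInf_lt_iff hbdd hne).1 hs
        exact le_trans hu (hFmono hus.le)
      have htd : Tendsto F (𝓝[>] (gcQ μ m j)) (𝓝 (F (gcQ μ m j))) :=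
        ((cdf μ).right_continuous (gcQ μ m j)).mono_left
          (nhdsWithin_mono _ Set.Ioi_subset_Ici_self)
      exact ge_of_tendsto htd (eventually_nhdsWithin_of_forall hev)
    · have hev : ∀ s ∈ Set.Iio (gcQ μ m j), F s ≤ (j:ℝ)/(m:ℝ) := by
        intro s hs
        by_contra h
        push_neg at h
        have : s ∈ S := le_of_lt h
        exact absurd (csInf_le hbdd this) (not_le.2 hs)
      exact le_of_tendsto (hFmono.tendsto_leftLim (gcQ μ m j))
        (eventually_nhdsWithin_of_forall hev)
  -- the deviation at grid points
  set D : ℕ → ℝ := fun n => ∑ j ∈ Finset.Icc 1 (m-1),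
    (|Fn n (gcQ μ m j) - F (gcQ μ m j)| + |Gn n (gcQ μ m j) - leftLim F (gcQ μ m j)|) with hDdef
  have hD0 : Tendsto D atTop (𝓝 0) := by
    have : Tendsto D atTop (𝓝 (∑ j ∈ Finset.Icc 1 (m-1), ((0:ℝ) + 0))) := by
      apply tendsto_finset_sum
      intro j _
      have t1 : Tendsto (fun n => |Fn n (gcQ μ m j) - F (gcQ μ m j)|) atTop (𝓝 0) := by
        have := ((h1 m j).sub (tendsto_const_nhds (x := F (gcQ μ m j)))).abs
        simpa [hF] using this
      have t2 : Tendsto (fun n => |Gn n (gcQ μ m j) - leftLim F (gcQ μ m j)|) atTop (𝓝 0) := by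
        have h2' := h2 m j
        rw [hIio] at h2'
        have := (h2'.sub (tendsto_const_nhds (x := leftLim F (gcQ μ m j)))).abs
        simpa using this
      exact t1.add t2
    simpa using this
  have hDnn : ∀ n, 0 ≤ D n := fun n =>
    Finset.sum_nonneg fun j _ => add_nonneg (abs_nonneg _) (abs_nonneg _)
  have hDsum : ∀ n, ∀ j ∈ Finset.Icc 1 (m-1),
      |Fn n (gcQ μ m j) - F (gcQ μ m j)| + |Gn n (gcQ μ m j) - leftLim F (gcQ μ m j)| ≤ D n := by
    intro n j hj
    have h := Finset.single_le_sum (f := fun j => |Fn n (gcQ μ m j) - F (gcQ μ m j)|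
      + |Gn n (gcQ μ m j) - leftLim F (gcQ μ m j)|)
      (fun i _ => add_nonneg (abs_nonneg _) (abs_nonneg _)) hj
    simpa [hDdef] using h
  have hDF : ∀ n, ∀ j ∈ Finset.Icc 1 (m-1), |Fn n (gcQ μ m j) - F (gcQ μ m j)| ≤ D n := by
    intro n j hj
    have := hDsum n j hj
    linarith [abs_nonneg (Gn n (gcQ μ m j) - leftLim F (gcQ μ m j))]
  have hDG : ∀ n, ∀ j ∈ Finset.Icc 1 (m-1), |Gn n (gcQ μ m j) - leftLim F (gcQ μ m j)| ≤ D n := by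
    intro n j hj
    have := hDsum n j hj
    linarith [abs_nonneg (Fn n (gcQ μ m j) - F (gcQ μ m j))]
  -- the key pointwise estimate
  have key : ∀ n t, |Fn n t - F t| ≤ D n + 1/(m:ℝ) := by
    intro n t
    rw [abs_le]
    constructor
    · -- lower bound : F t ≤ Fn n t + (D n + 1/m)
      rw [neg_le, neg_sub]
      set j0 : ℕ := ⌊(m:ℝ) * F t⌋₊ with hj0def
      have hj0le : (j0:ℝ) ≤ (m:ℝ) * F t := Nat.floor_le (mul_nonneg hm0.le (hF0 t))
      have hj0lt : (m:ℝ) * F t < (j0:ℝ) + 1 := Nat.lt_floor_add_one _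
      rcases Nat.eq_zero_or_pos j0 with hj0 | hj0
      · -- F t < 1/m
        rw [hj0] at hj0lt
        simp only [Nat.cast_zero, zero_add] at hj0lt
        have hFt : F t < 1/(m:ℝ) := by
          rw [lt_div_iff₀ hm0]; linarith [mul_comm (F t) (m:ℝ)]
        have := hFn0 n t
        have := hDnn n
        linarith
      · set j : ℕ := min j0 (m-1) with hjdef
        have hj1 : 1 ≤ j := le_min hj0 (by omega)
        have hjm : j ≤ m - 1 := min_le_right _ _
        have hmem : j ∈ Finset.Icc 1 (m-1) := Finset.mem_Icc.2 ⟨hj1, hjm⟩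
        obtain ⟨hK1, _⟩ := hgrid j hj1 hjm
        have hja : (j:ℝ)/(m:ℝ) ≤ F t := by
          rw [div_le_iff₀ hm0]
          have : (j:ℝ) ≤ (j0:ℝ) := by exact_mod_cast min_le_left j0 (m-1)
          calc (j:ℝ) ≤ (j0:ℝ) := this
            _ ≤ (m:ℝ) * F t := hj0le
            _ = F t * (m:ℝ) := mul_comm _ _
        have hFt : F t ≤ (j:ℝ)/(m:ℝ) + 1/(m:ℝ) := by
          rcases le_or_gt j0 (m-1) with h | h
          · have hjj : j = j0 := min_eq_left h
            rw [hjj, ← add_div, le_div_iff₀ hm0]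
            linarith [mul_comm (F t) (m:ℝ)]
          · have hjj : j = m - 1 := min_eq_right h.le
            have hcast : ((j:ℝ)) = (m:ℝ) - 1 := by
              rw [hjj]; push_cast [Nat.cast_sub (by omega : 1 ≤ m)]; ring
            rw [hcast, ← add_div, sub_add_cancel, div_self hm0.ne']
            exact hF1 t
        have haQ : gcQ μ m j ≤ t := csInf_le (by
          obtain ⟨t0, ht0⟩ := ((tendsto_cdf_atBot μ).eventually
            (eventually_lt_nhds (div_pos (by exact_mod_cast hj1 : (0:ℝ) < (j:ℝ)) hm0))).exists
          refine ⟨t0, fun s hs => ?_⟩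
          by_contra hc
          push_neg at hc
          exact absurd (le_trans hs (hFmono hc.le)) (not_le.2 ht0)) hja
        have hFna : F (gcQ μ m j) - D n ≤ Fn n (gcQ μ m j) := by
          have := hDF n j hmem
          rw [abs_le] at this
          linarith [this.1]
        have := hFnmono n haQ
        have hDn := hDnn n
        linarith
    · -- upper bound : Fn n t ≤ F t + (D n + 1/m)
      set k : ℕ := ⌊(m:ℝ) * F t⌋₊ + 1 with hkdef
      have hkle : (k:ℝ) - 1 ≤ (m:ℝ) * F t := by
        rw [hkdef]; push_cast; simpa using (Nat.floor_le (mul_nonneg hm0.le (hF0 t)))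
      have hklt : (m:ℝ) * F t < (k:ℝ) := by
        rw [hkdef]; push_cast; exact Nat.lt_floor_add_one _
      rcases le_or_gt m k with hmk | hkm
      · -- top case
        have h1m : (1:ℝ) ≤ F t + 1/(m:ℝ) := by
          have hmk' : (m:ℝ) ≤ (k:ℝ) := by exact_mod_cast hmk
          have hmul : (m:ℝ) * (1/(m:ℝ)) = 1 := by field_simp
          nlinarith
        have := hFn1 n t
        have := hDnn n
        linarith
      · have hk1 : 1 ≤ k := by omega
        have hkm1 : k ≤ m - 1 := by omega
        have hmem : k ∈ Finset.Icc 1 (m-1) := Finset.mem_Icc.2 ⟨hk1, hkm1⟩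
        obtain ⟨hK1, hK2⟩ := hgrid k hk1 hkm1
        have hFtk : F t < (k:ℝ)/(m:ℝ) := by
          rw [lt_div_iff₀ hm0]; linarith [mul_comm (F t) (m:ℝ)]
        have hFtk' : (k:ℝ)/(m:ℝ) - 1/(m:ℝ) ≤ F t := by
          rw [div_sub_div_same, div_le_iff₀ hm0]
          linarith [mul_comm (F t) (m:ℝ)]
        -- t ≤ gcQ μ m k
        have hSne : {s : ℝ | (k : ℝ) / (m : ℝ) ≤ F s}.Nonempty := by
          have hkr1 : (k:ℝ)/(m:ℝ) < 1 := by
            rw [div_lt_one hm0]; exact_mod_cast hkm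
          exact ((tendsto_cdf_atTop μ).eventually (eventually_ge_nhds hkr1)).exists
        have htQ : t ≤ gcQ μ m k := by
          apply le_csInf hSne
          intro s hs
          by_contra hc
          push_neg at hc
          exact absurd (le_trans hs (hFmono hc.le)) (not_le.2 hFtk)
        rcases eq_or_lt_of_le htQ with heq | hlt
        · have := hDF n k hmem
          rw [← heq] at this
          rw [abs_le] at this
          have hDn := hDnn n
          have hminv : (0:ℝ) ≤ 1/(m:ℝ) := by positivity
          linarith [this.2]
        · have hGn : Gn n (gcQ μ m k) ≤ leftLim F (gcQ μ m k) + D n := by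
            have := hDG n k hmem
            rw [abs_le] at this
            linarith [this.1]
          have := hFnGn n hlt
          linarith
  -- conclusion
  have hev : ∀ᶠ n in atTop, D n < ε/2 := hD0.eventually (eventually_lt_nhds (half_pos hε))
  rw [eventually_atTop] at hev
  obtain ⟨N, hN⟩ := hev
  refine ⟨N, fun n hn => ?_⟩
  have hbddA : BddAbove (Set.range fun t => |Fn n t - F t|) :=
    ⟨D n + 1/(m:ℝ), Set.forall_mem_range.2 (key n)⟩
  have hsup_le : (⨆ t : ℝ, |Fn n t - F t|) ≤ D n + 1/(m:ℝ) := ciSup_le (key n)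
  have hsup_nn : 0 ≤ ⨆ t : ℝ, |Fn n t - F t| :=
    le_trans (abs_nonneg _) (le_ciSup hbddA (0:ℝ))
  rw [Real.dist_eq, sub_zero, abs_of_nonneg hsup_nn]
  calc (⨆ t : ℝ, |Fn n t - F t|) ≤ D n + 1/(m:ℝ) := hsup_le
    _ < ε/2 + ε/2 := by have := hN n hn; linarith
    _ = ε := add_halves ε

theorem stmt13 {Ω : Type*} [MeasurableSpace Ω] (P : Measure Ω)
    [IsProbabilityMeasure P]
    (μ : Measure ℝ) [IsProbabilityMeasure μ]
    (X : ℕ → Ω → ℝ) (hmeas : ∀ k, Measurable (X k))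
    -- independent ...
    (hindep : iIndepFun X P)
    -- ... identically distributed with common law μ
    (hdist : ∀ k, P.map (X k) = μ) :
    ∀ᵐ ω ∂P, Tendsto (fun n : ℕ =>
        ⨆ t : ℝ, |(n : ℝ)⁻¹ * (∑ k ∈ Finset.range n, if X k ω ≤ t then (1 : ℝ) else 0)
          - (μ (Set.Iic t)).toReal|) atTop (𝓝 0) := by
  have hA : ∀ᵐ ω ∂P, ∀ m j : ℕ, Tendsto (fun n : ℕ =>
      (∑ k ∈ Finset.range n, (Set.Iic (gcQ μ m j)).indicator (fun _ => (1:ℝ)) (X k ω)) / n)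
      atTop (𝓝 (μ (Set.Iic (gcQ μ m j))).toReal) :=
    ae_all_iff.2 fun m => ae_all_iff.2 fun j =>
      gc_slln_indicator P μ X hmeas hindep hdist _ measurableSet_Iic
  have hB : ∀ᵐ ω ∂P, ∀ m j : ℕ, Tendsto (fun n : ℕ =>
      (∑ k ∈ Finset.range n, (Set.Iio (gcQ μ m j)).indicator (fun _ => (1:ℝ)) (X k ω)) / n)
      atTop (𝓝 (μ (Set.Iio (gcQ μ m j))).toReal) :=
    ae_all_iff.2 fun m => ae_all_iff.2 fun j =>
      gc_slln_indicator P μ X hmeas hindep hdist _ measurableSet_Iio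
  filter_upwards [hA, hB] with ω hA hB
  simp only [← measureReal_def, ← cdf_eq_real]
  have h1' : ∀ m j : ℕ, Tendsto (fun n : ℕ =>
      (n : ℝ)⁻¹ * (∑ k ∈ Finset.range n, if X k ω ≤ gcQ μ m j then (1 : ℝ) else 0))
      atTop (𝓝 (cdf μ (gcQ μ m j))) := by
    intro m j
    have := hA m j
    simp only [Set.indicator_apply, Set.mem_Iic, div_eq_inv_mul] at this
    rwa [cdf_eq_real]
  have h2' : ∀ m j : ℕ, Tendsto (fun n : ℕ =>
      (n : ℝ)⁻¹ * (∑ k ∈ Finset.range n, if X k ω < gcQ μ m j then (1 : ℝ) else 0))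
      atTop (𝓝 ((μ (Set.Iio (gcQ μ m j))).toReal)) := by
    intro m j
    have := hB m j
    simpa only [Set.indicator_apply, Set.mem_Iio, div_eq_inv_mul] using this
  refine gc_det μ
    (fun n t => (n : ℝ)⁻¹ * (∑ k ∈ Finset.range n, if X k ω ≤ t then (1 : ℝ) else 0))
    (fun n t => (n : ℝ)⁻¹ * (∑ k ∈ Finset.range n, if X k ω < t then (1 : ℝ) else 0))
    (fun n t => by positivity) ?_ ?_ ?_ h1' h2'
  · -- ≤ 1
    intro n t
    rcases Nat.eq_zero_or_pos n with hn | hn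
    · simp [hn]
    · have hsum : (∑ k ∈ Finset.range n, if X k ω ≤ t then (1 : ℝ) else 0) ≤ n := by
        calc (∑ k ∈ Finset.range n, if X k ω ≤ t then (1 : ℝ) else 0)
            ≤ ∑ k ∈ Finset.range n, (1:ℝ) :=
              Finset.sum_le_sum (fun k _ => by split_ifs <;> norm_num)
          _ = n := by simp
      have hn0 : (0:ℝ) < n := by exact_mod_cast hn
      calc (n : ℝ)⁻¹ * (∑ k ∈ Finset.range n, if X k ω ≤ t then (1 : ℝ) else 0)
          ≤ (n : ℝ)⁻¹ * n := mul_le_mul_of_nonneg_left hsum (by positivity)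
        _ = 1 := inv_mul_cancel₀ hn0.ne'
  · -- monotone
    intro n s t hst
    apply mul_le_mul_of_nonneg_left _ (by positivity)
    apply Finset.sum_le_sum
    intro k _
    split_ifs with h h'
    · exact le_rfl
    · exact absurd (h.trans hst) h'
    · norm_num
    · exact le_rfl
  · -- Fn ≤ Gn for s < t
    intro n s t hst
    apply mul_le_mul_of_nonneg_left _ (by positivity)
    apply Finset.sum_le_sum
    intro k _
    split_ifs with h h'
    · exact le_rfl
    · exact absurd (lt_of_le_of_lt h hst) h'
    · norm_num
    · exact le_rfl
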